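/- Let d ≥ 1 be an integer and 0 ≤ i ≤ d. Let (a_n)_{n∈ℕ} be a real sequence with a_n → a ∈ ℝ such that 1 + d·a_n > 0 for all n and 1 + d·a > 0. Then lim_{n→∞} ∫_{ℝ^d} Π(λ)·𝟙_{O_i}(λ)·f_{a_n}(λ) dλ = ∫_{ℝ^d} Π(λ)·𝟙_{O_i}(λ)·f_a(λ) dλ. (Lemma 4.2: continuity in the covariance parameter of the GOI expectation.) -/

import Mathlib

open MeasureTheory Filter Real

/-- `K_d := 2^{d/2} ∏_{j=1}^d Γ(j/2)`. -/
noncomputable def Kd (d : ℕ) : ℝ :=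
  2 ^ ((d : ℝ) / 2) * ∏ j ∈ Finset.Icc 1 d, Real.Gamma ((j : ℝ) / 2)

/-- `Π(λ) := ∏_{j=1}^d |λ_j|`. -/
noncomputable def PiAbs (d : ℕ) (lam : Fin d → ℝ) : ℝ := ∏ j, |lam j|

/-- `Δ(λ) := ∏_{1 ≤ h < k ≤ d} |λ_h − λ_k|`. -/
noncomputable def DeltaV (d : ℕ) (lam : Fin d → ℝ) : ℝ :=
  ∏ h : Fin d, ∏ k : Fin d, if h < k then |lam h - lam k| else 1

/-- The density of the ordered eigenvalues of a GOI(c) matrix. -/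
noncomputable def fGOI (d : ℕ) (c : ℝ) (lam : Fin d → ℝ) : ℝ :=
  (Kd d * Real.sqrt (1 + d * c))⁻¹ * DeltaV d lam *
    Real.exp (-(∑ j, lam j ^ 2) / 2 + c * (∑ j, lam j) ^ 2 / (2 * (1 + d * c))) *
    Set.indicator {x : Fin d → ℝ | Monotone x} (fun _ => 1) lam

/-- `O_i := {λ : λ_i < 0 < λ_{i+1}}` with conventions `λ_0 = −∞`, `λ_{d+1} = +∞`
(one-based indexing; coordinates here are zero-based). -/
def Oi (d i : ℕ) : Set (Fin d → ℝ) :=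
  {lam | (∀ j : Fin d, (j : ℕ) + 1 = i → lam j < 0) ∧ (∀ j : Fin d, (j : ℕ) = i → 0 < lam j)}

/-- `∫_{ℝ^d} Π(λ)·𝟙_{O_i}(λ)·f_c(λ) dλ`. -/
noncomputable def GOIint (d i : ℕ) (c : ℝ) : ℝ :=
  ∫ lam : Fin d → ℝ,
    PiAbs d lam * Set.indicator (Oi d i) (fun _ => 1) lam * fGOI d c lam

lemma Kd_pos (d : ℕ) : 0 < Kd d := by
  unfold Kd
  refine mul_pos (by positivity) (Finset.prod_pos fun j hj => ?_)
  have h1 : 1 ≤ j := (Finset.mem_Icc.mp hj).1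
  have : (0:ℝ) < j := by exact_mod_cast h1
  exact Real.Gamma_pos_of_pos (by positivity)

lemma PiAbs_nonneg (d : ℕ) (lam : Fin d → ℝ) : 0 ≤ PiAbs d lam :=
  Finset.prod_nonneg fun j _ => abs_nonneg _

lemma DeltaV_nonneg (d : ℕ) (lam : Fin d → ℝ) : 0 ≤ DeltaV d lam := by
  refine Finset.prod_nonneg fun h _ => Finset.prod_nonneg fun k _ => ?_
  split <;> positivity

lemma ind_nonneg {α : Type*} (s : Set α) (x : α) :
    0 ≤ Set.indicator s (fun _ => (1:ℝ)) x := by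
  classical
  rw [Set.indicator_apply]; split <;> norm_num

lemma ind_le_one {α : Type*} (s : Set α) (x : α) :
    Set.indicator s (fun _ => (1:ℝ)) x ≤ 1 := by
  classical
  rw [Set.indicator_apply]; split <;> norm_num

lemma per_coord (k ε x : ℝ) (hε : 0 < ε) : k * |x| ≤ ε * x^2 / 4 + k^2 / ε := by
  have key : ε * (k * |x|) ≤ ε * ε * x^2 / 4 + k^2 := by
    nlinarith [sq_nonneg (ε * |x| - 2 * k), sq_abs x]
  have h2 : ε * (ε * x^2 / 4 + k^2 / ε) = ε * ε * x^2 / 4 + k^2 := by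
    field_simp
  exact (mul_le_mul_iff_right₀ hε).mp (by rw [h2]; exact key)

lemma poly_bound (d : ℕ) (ε : ℝ) (hε : 0 < ε) (lam : Fin d → ℝ) :
    PiAbs d lam * DeltaV d lam ≤
      Real.exp (ε / 4 * ∑ j, lam j ^ 2 + d * (2 * d + 1)^2 / ε) := by
  set P : ℝ := ∏ j, (1 + |lam j|) with hP
  have hP0 : 0 ≤ P := Finset.prod_nonneg fun j _ => by positivity
  have hA : PiAbs d lam ≤ P :=
    Finset.prod_le_prod (fun j _ => abs_nonneg _) (fun j _ => by linarith [abs_nonneg (lam j)])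
  have hB : DeltaV d lam ≤ P ^ (2 * d) := by
    have step : DeltaV d lam ≤ ∏ h : Fin d, ∏ k : Fin d, ((1 + |lam h|) * (1 + |lam k|)) := by
      refine Finset.prod_le_prod (fun h _ => Finset.prod_nonneg fun k _ => by split <;> positivity)
        (fun h _ => Finset.prod_le_prod (fun k _ => by split <;> positivity) (fun k _ => ?_))
      split
      · nlinarith [abs_nonneg (lam h), abs_nonneg (lam k), abs_sub (lam h) (lam k),
          abs_sub_abs_le_abs_sub (lam h) (lam k), abs_sub_le_iff.mp (le_refl |lam h - lam k|)]
      · nlinarith [abs_nonneg (lam h), abs_nonneg (lam k)]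
    calc DeltaV d lam ≤ _ := step
      _ = P ^ (2 * d) := by
        have hin : ∀ h : Fin d, ∏ k : Fin d, ((1 + |lam h|) * (1 + |lam k|))
            = (1 + |lam h|) ^ d * P := by
          intro h
          rw [Finset.prod_mul_distrib, Finset.prod_const, Finset.card_univ, Fintype.card_fin]
        rw [Finset.prod_congr rfl (fun h _ => hin h), Finset.prod_mul_distrib,
          Finset.prod_const, Finset.card_univ, Fintype.card_fin, Finset.prod_pow, ← hP,
          ← pow_add, two_mul]
  have hC : P ^ (2 * d + 1) ≤ Real.exp ((2 * d + 1) * ∑ j, |lam j|) := by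
    have h1 : P ≤ Real.exp (∑ j, |lam j|) := by
      rw [Real.exp_sum]
      exact Finset.prod_le_prod (fun j _ => by positivity)
        (fun j _ => by have := Real.add_one_le_exp |lam j|; linarith)
    calc P ^ (2 * d + 1) ≤ Real.exp (∑ j, |lam j|) ^ (2 * d + 1) := pow_le_pow_left₀ hP0 h1 _
      _ = Real.exp ((2 * d + 1) * ∑ j, |lam j|) := by
        rw [← Real.exp_nat_mul]; push_cast; ring_nf
  have hD : ((2 * d + 1 : ℕ) : ℝ) * ∑ j, |lam j| ≤ ε / 4 * ∑ j, lam j ^ 2 + d * (2 * d + 1)^2 / ε := by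
    have : ∀ j : Fin d, ((2 * d + 1 : ℕ) : ℝ) * |lam j| ≤ ε * lam j ^ 2 / 4 + ((2 * d + 1 : ℕ) : ℝ)^2 / ε :=
      fun j => per_coord _ ε (lam j) hε
    calc ((2 * d + 1 : ℕ) : ℝ) * ∑ j, |lam j| = ∑ j, ((2 * d + 1 : ℕ) : ℝ) * |lam j| := by
          rw [Finset.mul_sum]
      _ ≤ ∑ j : Fin d, (ε * lam j ^ 2 / 4 + ((2 * d + 1 : ℕ) : ℝ)^2 / ε) :=
          Finset.sum_le_sum fun j _ => this j
      _ = ε / 4 * ∑ j, lam j ^ 2 + d * (2 * d + 1)^2 / ε := by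
          rw [Finset.sum_add_distrib, Finset.sum_const, Finset.card_univ, Fintype.card_fin,
            nsmul_eq_mul]
          congr 1
          · rw [Finset.mul_sum]; exact Finset.sum_congr rfl fun j _ => by ring
          · push_cast; ring
  calc PiAbs d lam * DeltaV d lam ≤ P * P ^ (2 * d) :=
        mul_le_mul hA hB (DeltaV_nonneg d lam) hP0
    _ = P ^ (2 * d + 1) := by ring
    _ ≤ Real.exp ((2 * d + 1) * ∑ j, |lam j|) := hC
    _ ≤ _ := by
        apply Real.exp_le_exp.mpr
        exact_mod_cast hD

lemma exponent_bound (d : ℕ) (c ε : ℝ) (hc : 0 < 1 + d * c) (hε0 : 0 < ε) (hε1 : ε ≤ 1)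
    (hεc : ε * (1 + d * c) ≤ 1) (lam : Fin d → ℝ) :
    -(∑ j, lam j ^ 2) / 2 + c * (∑ j, lam j) ^ 2 / (2 * (1 + d * c)) ≤
      -(ε / 2) * ∑ j, lam j ^ 2 := by
  set Q := ∑ j, lam j ^ 2 with hQdef
  set S := ∑ j, lam j with hSdef
  have hQ : 0 ≤ Q := Finset.sum_nonneg fun j _ => sq_nonneg _
  have hS : S ^ 2 ≤ d * Q := by
    have h := sq_sum_le_card_mul_sum_sq (s := (Finset.univ : Finset (Fin d))) (f := lam)
    simpa [Finset.card_univ] using h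
  have key : c * S ^ 2 / (2 * (1 + d * c)) ≤ (1 - ε) * Q / 2 := by
    rw [div_le_div_iff₀ (by positivity) (by norm_num)]
    rcases le_or_gt 0 c with hc0 | hc0
    · have h1 : c * S ^ 2 ≤ c * (d * Q) := mul_le_mul_of_nonneg_left hS hc0
      have h2 : 0 ≤ Q * (1 - ε * (1 + d * c)) := mul_nonneg hQ (by linarith)
      nlinarith
    · have h1 : c * S ^ 2 ≤ 0 := mul_nonpos_of_nonpos_of_nonneg hc0.le (sq_nonneg _)
      have h2 : 0 ≤ (1 - ε) * Q := mul_nonneg (by linarith) hQ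
      nlinarith
  linarith

lemma gauss_int (d : ℕ) (C ε : ℝ) (hε : 0 < ε) :
    Integrable (fun lam : Fin d → ℝ => C * Real.exp (-(ε / 4) * ∑ j, lam j ^ 2)) := by
  have heq : (fun lam : Fin d → ℝ => Real.exp (-(ε / 4) * ∑ j, lam j ^ 2))
      = fun lam => ∏ j, Real.exp (-(ε / 4) * lam j ^ 2) := by
    ext lam
    rw [← Real.exp_sum, Finset.mul_sum]
  have : Integrable (fun lam : Fin d → ℝ => Real.exp (-(ε / 4) * ∑ j, lam j ^ 2)) := by
    rw [heq]
    exact Integrable.fintype_prod fun _ => integrable_exp_neg_mul_sq (by positivity)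
  exact this.const_mul C

lemma monotone_meas (d : ℕ) : MeasurableSet {x : Fin d → ℝ | Monotone x} := by
  have : {x : Fin d → ℝ | Monotone x}
      = ⋂ (p : Fin d × Fin d), ⋂ (_ : p.1 ≤ p.2), {x : Fin d → ℝ | x p.1 ≤ x p.2} := by
    ext x
    simp only [Set.mem_setOf_eq, Set.mem_iInter]
    constructor
    · exact fun h p hp => h hp
    · intro h a b hab; exact h (a, b) hab
  rw [this]
  exact MeasurableSet.iInter fun p => MeasurableSet.iInter fun _ =>
    measurableSet_le (measurable_pi_apply _) (measurable_pi_apply _)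

lemma Oi_meas (d i : ℕ) : MeasurableSet (Oi d i) := by
  have : Oi d i = (⋂ (j : Fin d), ⋂ (_ : (j : ℕ) + 1 = i), {lam : Fin d → ℝ | lam j < 0}) ∩
      (⋂ (j : Fin d), ⋂ (_ : (j : ℕ) = i), {lam : Fin d → ℝ | 0 < lam j}) := by
    ext lam
    simp [Oi, Set.mem_iInter]
  rw [this]
  refine MeasurableSet.inter ?_ ?_ <;>
    exact MeasurableSet.iInter fun j => MeasurableSet.iInter fun _ => by
      first
      | exact measurableSet_lt (measurable_pi_apply _) measurable_const
      | exact measurableSet_lt measurable_const (measurable_pi_apply _)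

lemma exists_pos_lb (g : ℕ → ℝ) (L : ℝ) (hg : Tendsto g atTop (nhds L)) (hpos : ∀ n, 0 < g n)
    (hL : 0 < L) : ∃ m, 0 < m ∧ ∀ n, m ≤ g n := by
  have hev : ∀ᶠ n in atTop, L / 2 < g n := hg.eventually (eventually_gt_nhds (by linarith))
  obtain ⟨N, hN⟩ := hev.exists_forall_of_atTop
  set m0 : ℝ := (Finset.range (N + 1)).inf' ⟨0, by simp⟩ g with hm0
  refine ⟨min (L / 2) m0, lt_min (by linarith) ?_, fun n => ?_⟩
  · rw [hm0]
    exact (Finset.lt_inf'_iff _).mpr fun b _ => hpos b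
  · rcases le_or_gt n N with h | h
    · exact le_trans (min_le_right _ _)
        (Finset.inf'_le g (Finset.mem_range.mpr (by omega)))
    · exact le_trans (min_le_left _ _) (hN n h.le).le

lemma fGOI_nonneg (d : ℕ) (c : ℝ) (lam : Fin d → ℝ) : 0 ≤ fGOI d c lam := by
  unfold fGOI
  have h1 : (0:ℝ) ≤ (Kd d * Real.sqrt (1 + d * c))⁻¹ :=
    inv_nonneg.mpr (mul_nonneg (Kd_pos d).le (Real.sqrt_nonneg _))
  exact mul_nonneg (mul_nonneg (mul_nonneg h1 (DeltaV_nonneg d lam)) (Real.exp_nonneg _))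
    (ind_nonneg _ _)

lemma PiAbs_meas (d : ℕ) : Measurable (PiAbs d) := by
  unfold PiAbs
  exact Finset.measurable_prod _ fun j _ => (measurable_pi_apply j).abs

lemma DeltaV_meas (d : ℕ) : Measurable (DeltaV d) := by
  unfold DeltaV
  refine Finset.measurable_prod _ fun h _ => Finset.measurable_prod _ fun k _ => ?_
  by_cases hhk : h < k
  · simp only [if_pos hhk]
    exact ((measurable_pi_apply h).sub (measurable_pi_apply k)).abs
  · simp only [if_neg hhk]
    exact measurable_const

lemma F_meas (d i : ℕ) (c : ℝ) :
    AEStronglyMeasurable (fun lam : Fin d → ℝ =>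
      PiAbs d lam * Set.indicator (Oi d i) (fun _ => 1) lam * fGOI d c lam) volume := by
  refine Measurable.aestronglyMeasurable ?_
  refine (((PiAbs_meas d).mul (measurable_const.indicator (Oi_meas d i)))).mul ?_
  unfold fGOI
  refine Measurable.mul ?_ (measurable_const.indicator (monotone_meas d))
  refine Measurable.mul (measurable_const.mul (DeltaV_meas d)) ?_
  refine Real.measurable_exp.comp ?_
  apply Measurable.add
  · exact ((Finset.measurable_sum _ fun j _ => (measurable_pi_apply j).pow_const 2).neg).div_const 2
  · exact (((Finset.measurable_sum _ fun j _ => measurable_pi_apply j).pow_const 2).const_mul c).div_const _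


/-- Lemma 4.2: continuity in the covariance parameter of the GOI expectation. -/
theorem statement6 (d i : ℕ) (hd : 1 ≤ d) (hi : i ≤ d) (a : ℕ → ℝ) (A : ℝ)
    (ha : Tendsto a atTop (nhds A)) (han : ∀ n, 0 < 1 + (d : ℝ) * a n)
    (hA : 0 < 1 + (d : ℝ) * A) :
    Tendsto (fun n => GOIint d i (a n)) atTop (nhds (GOIint d i A)) := by
  have t0 : Tendsto (fun n => 1 + (d:ℝ) * a n) atTop (nhds (1 + (d:ℝ) * A)) :=
    tendsto_const_nhds.add (ha.const_mul _)
  obtain ⟨m, hm0, hmle⟩ := exists_pos_lb _ _ t0 han hA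
  obtain ⟨M, hM⟩ : ∃ M : ℝ, ∀ n, 1 + (d:ℝ) * a n ≤ M := by
    obtain ⟨M, hM⟩ := t0.bddAbove_range
    exact ⟨M, fun n => hM ⟨n, rfl⟩⟩
  have hM0 : 0 < M := lt_of_lt_of_le (han 0) (hM 0)
  set ε : ℝ := min 1 (1/M) with hεdef
  have hε0 : 0 < ε := lt_min one_pos (by positivity)
  have hε1 : ε ≤ 1 := min_le_left _ _
  have hεc : ∀ n, ε * (1 + (d:ℝ) * a n) ≤ 1 := fun n => by
    calc ε * (1 + (d:ℝ) * a n) ≤ (1/M) * M :=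
          mul_le_mul (min_le_right _ _) (hM n) (han n).le (by positivity)
      _ = 1 := by field_simp
  set bound : (Fin d → ℝ) → ℝ := fun lam =>
    (Kd d * Real.sqrt m)⁻¹ * Real.exp (d * (2*d+1)^2 / ε) *
      Real.exp (-(ε/4) * ∑ j, lam j ^ 2) with hbd
  have hdom : ∀ (c : ℝ), 0 < 1 + (d:ℝ)*c → m ≤ 1 + (d:ℝ)*c → ε * (1 + (d:ℝ)*c) ≤ 1 →
      ∀ lam : Fin d → ℝ,
      PiAbs d lam * Set.indicator (Oi d i) (fun _ => 1) lam * fGOI d c lam ≤ bound lam := by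
    intro c hc hmc hec lam
    set Q := ∑ j, lam j ^ 2 with hQ
    have hR : (0:ℝ) ≤ (Kd d * Real.sqrt m)⁻¹ :=
      inv_nonneg.mpr (mul_nonneg (Kd_pos d).le (Real.sqrt_nonneg _))
    have e1 : (Kd d * Real.sqrt (1 + (d:ℝ)*c))⁻¹ ≤ (Kd d * Real.sqrt m)⁻¹ := by
      apply inv_anti₀
      · exact mul_pos (Kd_pos d) (Real.sqrt_pos.mpr hm0)
      · exact mul_le_mul_of_nonneg_left (Real.sqrt_le_sqrt hmc) (Kd_pos d).le
    have e2 : Real.exp (-(∑ j, lam j ^ 2)/2 + c * (∑ j, lam j)^2 / (2*(1+(d:ℝ)*c)))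
        ≤ Real.exp (-(ε/2) * Q) :=
      Real.exp_le_exp.mpr (exponent_bound d c ε hc hε0 hε1 hec lam)
    have h1 : fGOI d c lam ≤ (Kd d * Real.sqrt m)⁻¹ * DeltaV d lam * Real.exp (-(ε/2) * Q) := by
      unfold fGOI
      have hnn : (0:ℝ) ≤ (Kd d * Real.sqrt (1 + (d:ℝ)*c))⁻¹ * DeltaV d lam *
          Real.exp (-(∑ j, lam j ^ 2)/2 + c * (∑ j, lam j)^2 / (2*(1+(d:ℝ)*c))) :=
        mul_nonneg (mul_nonneg (inv_nonneg.mpr (mul_nonneg (Kd_pos d).le (Real.sqrt_nonneg _)))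
          (DeltaV_nonneg d lam)) (Real.exp_nonneg _)
      calc (Kd d * Real.sqrt (1 + (d:ℝ)*c))⁻¹ * DeltaV d lam *
            Real.exp (-(∑ j, lam j ^ 2)/2 + c * (∑ j, lam j)^2 / (2*(1+(d:ℝ)*c))) *
            Set.indicator {x : Fin d → ℝ | Monotone x} (fun _ => 1) lam
          ≤ (Kd d * Real.sqrt (1 + (d:ℝ)*c))⁻¹ * DeltaV d lam *
            Real.exp (-(∑ j, lam j ^ 2)/2 + c * (∑ j, lam j)^2 / (2*(1+(d:ℝ)*c))) * 1 :=
            mul_le_mul_of_nonneg_left (ind_le_one _ _) hnn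
        _ = (Kd d * Real.sqrt (1 + (d:ℝ)*c))⁻¹ * DeltaV d lam *
            Real.exp (-(∑ j, lam j ^ 2)/2 + c * (∑ j, lam j)^2 / (2*(1+(d:ℝ)*c))) := mul_one _
        _ ≤ (Kd d * Real.sqrt m)⁻¹ * DeltaV d lam * Real.exp (-(ε/2) * Q) :=
            mul_le_mul (mul_le_mul_of_nonneg_right e1 (DeltaV_nonneg d lam)) e2
              (Real.exp_nonneg _) (mul_nonneg hR (DeltaV_nonneg d lam))
    calc PiAbs d lam * Set.indicator (Oi d i) (fun _ => 1) lam * fGOI d c lam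
        ≤ PiAbs d lam * 1 * ((Kd d * Real.sqrt m)⁻¹ * DeltaV d lam * Real.exp (-(ε/2) * Q)) :=
          mul_le_mul (mul_le_mul_of_nonneg_left (ind_le_one _ _) (PiAbs_nonneg d lam)) h1
            (fGOI_nonneg d c lam) (mul_nonneg (PiAbs_nonneg d lam) zero_le_one)
      _ = (Kd d * Real.sqrt m)⁻¹ * (PiAbs d lam * DeltaV d lam) * Real.exp (-(ε/2) * Q) := by
          ring
      _ ≤ (Kd d * Real.sqrt m)⁻¹ * Real.exp (ε/4 * Q + d * (2*d+1)^2 / ε) *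
            Real.exp (-(ε/2) * Q) :=
          mul_le_mul_of_nonneg_right
            (mul_le_mul_of_nonneg_left (poly_bound d ε hε0 lam) hR) (Real.exp_nonneg _)
      _ = bound lam := by
          show _ = (Kd d * Real.sqrt m)⁻¹ * Real.exp (↑d * (2 * ↑d + 1) ^ 2 / ε) *
            Real.exp (-(ε / 4) * ∑ j, lam j ^ 2)
          rw [mul_assoc, mul_assoc, ← Real.exp_add, ← Real.exp_add, ← hQ]
          congr 2
          ring
  simp only [GOIint]
  apply tendsto_integral_of_dominated_convergence bound (fun n => F_meas d i (a n))
    (gauss_int d _ ε hε0)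
  · intro n
    refine Eventually.of_forall fun lam => ?_
    rw [Real.norm_eq_abs, abs_of_nonneg (mul_nonneg (mul_nonneg (PiAbs_nonneg d lam)
      (ind_nonneg _ _)) (fGOI_nonneg d (a n) lam))]
    exact hdom (a n) (han n) (hmle n) (hεc n) lam
  · refine Eventually.of_forall fun lam => ?_
    have hne : Kd d * Real.sqrt (1 + (d:ℝ) * A) ≠ 0 :=
      ne_of_gt (mul_pos (Kd_pos d) (Real.sqrt_pos.mpr hA))
    have tinv : Tendsto (fun n => (Kd d * Real.sqrt (1 + (d:ℝ) * a n))⁻¹) atTop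
        (nhds ((Kd d * Real.sqrt (1 + (d:ℝ) * A))⁻¹)) :=
      (tendsto_const_nhds.mul ((Real.continuous_sqrt.tendsto _).comp t0)).inv₀ hne
    have tE : Tendsto (fun n => -(∑ j, lam j ^ 2)/2 +
        a n * (∑ j, lam j)^2 / (2*(1+(d:ℝ)*a n))) atTop
        (nhds (-(∑ j, lam j ^ 2)/2 + A * (∑ j, lam j)^2 / (2*(1+(d:ℝ)*A)))) := by
      refine tendsto_const_nhds.add ?_
      exact (ha.mul_const _).div (t0.const_mul 2) (by positivity)
    have texp := (Real.continuous_exp.tendsto _).comp tE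
    have tg : Tendsto (fun n => fGOI d (a n) lam) atTop (nhds (fGOI d A lam)) := by
      simp only [fGOI]
      exact ((tinv.mul tendsto_const_nhds).mul texp).mul tendsto_const_nhds
    exact (tendsto_const_nhds (x := PiAbs d lam *
      Set.indicator (Oi d i) (fun _ => 1) lam)).mul tg
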